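/- Let G be a strongly connected semi-complete directed graph on n ≥ 3 vertices. Then every vertex of G is contained in a directed cycle of length k, for each k = 3, …, n. -/

import Mathlib

/-- A digraph (edge relation) is semi-complete if between any two distinct vertices there is
an edge in at least one direction. -/
def SemiComplete {V : Type*} (r : V → V → Prop) : Prop :=
  ∀ i j : V, i ≠ j → (r i j ∨ r j i)

/-- A digraph is strongly connected if for every pair of distinct vertices there is a
directed path from one to the other. -/
def StronglyConnected {V : Type*} (r : V → V → Prop) : Prop :=
  ∀ i j : V, i ≠ j → Relation.ReflTransGen r i j

/-- Crossing lemma: a path from inside `S` to outside `S` uses an edge leaving `S`. -/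
lemma moon_cross {V : Type*} {r : V → V → Prop} {S : Set V} {a b : V}
    (h : Relation.ReflTransGen r a b) (ha : a ∈ S) :
    b ∉ S → ∃ x ∈ S, ∃ y, y ∉ S ∧ r x y := by
  induction h with
  | refl => exact fun hb => absurd ha hb
  | @tail c d hac hcd ih =>
    intro hb
    by_cases hc : c ∈ S
    · exact ⟨c, hc, d, hb, hcd⟩
    · exact ih hc

lemma moon_val_one {m : ℕ} (hm : 2 ≤ m) : (1 : ZMod m).val = 1 := by
  haveI : Fact (1 < m) := ⟨by omega⟩
  exact ZMod.val_one m

lemma moon_val_add_one {m : ℕ} [NeZero m] (hm : 2 ≤ m) (t : ZMod m) (h : t.val + 1 < m) :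
    (t + 1).val = t.val + 1 := by
  rw [ZMod.val_add, moon_val_one hm, Nat.mod_eq_of_lt h]

lemma moon_add_one_eq_zero {m : ℕ} [NeZero m] (t : ZMod m) (h : t.val + 1 = m) :
    t + 1 = 0 := by
  have h2 : ((t.val + 1 : ℕ) : ZMod m) = 0 := by rw [h]; exact ZMod.natCast_self m
  calc t + 1 = ((t.val : ℕ) : ZMod m) + 1 := by rw [ZMod.natCast_rightInverse t]
    _ = ((t.val + 1 : ℕ) : ZMod m) := by push_cast; ring
    _ = 0 := h2

section Moon

variable {n : ℕ} {r : Fin n → Fin n → Prop}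

/-- Every vertex of a strongly connected semi-complete digraph on `≥ 3` vertices
lies on a triangle. -/
lemma moon_triangle (hn : 3 ≤ n) (hsemi : SemiComplete r) (hsc : StronglyConnected r)
    (v : Fin n) : ∃ a b : Fin n, v ≠ a ∧ v ≠ b ∧ a ≠ b ∧ r v a ∧ r a b ∧ r b v := by
  have hexists_ne : ∀ s : Finset (Fin n), s.card < n → ∃ a : Fin n, a ∉ s := by
    intro s hs
    by_contra hcon
    push_neg at hcon
    have h1 : (Finset.univ : Finset (Fin n)).card ≤ s.card :=
      Finset.card_le_card (fun x _ => hcon x)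
    simp only [Finset.card_univ, Fintype.card_fin] at h1
    omega
  obtain ⟨j, hj⟩ := hexists_ne {v} (by simp; omega)
  simp only [Finset.mem_singleton] at hj
  by_contra hcon
  push_neg at hcon
  -- hcon : ∀ a b, v ≠ a → v ≠ b → a ≠ b → r v a → r a b → ¬ r b v
  by_cases hI : ∃ b, b ≠ v ∧ ¬ r v b
  · -- Case A : some vertex is a "pure in-neighbor" of v
    obtain ⟨b₀, hb₀v, hb₀⟩ := hI
    obtain ⟨x, hx, y, hy, hxy⟩ := moon_cross (S := {x | x = v ∨ r v x})
      (hsc v b₀ (Ne.symm hb₀v)) (Or.inl rfl)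
      (by simp only [Set.mem_setOf_eq]; push_neg; exact ⟨hb₀v, hb₀⟩)
    simp only [Set.mem_setOf_eq] at hx hy
    push_neg at hy
    obtain ⟨hyv, hvy⟩ := hy
    rcases hx with rfl | hvx
    · exact hvy hxy
    · have hxv : x ≠ v := by rintro rfl; exact hvy hxy
      have hxy' : x ≠ y := by rintro rfl; exact hvy hvx
      have hyv' : r y v := (hsemi v y (Ne.symm hyv)).resolve_left hvy
      exact hcon x y (Ne.symm hxv) (Ne.symm hyv) hxy' hvx hxy hyv'
  · -- Case B : v beats every other vertex
    push_neg at hI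
    -- hI : ∀ b, b ≠ v → r v b
    -- find an in-neighbor b of v
    obtain ⟨b, hb, y₀, hy₀, hbv⟩ := moon_cross (S := {x | x ≠ v})
      (hsc j v hj) hj (by simp)
    simp only [Set.mem_setOf_eq, not_not] at hb hy₀
    rw [hy₀] at hbv
    -- b is the unique in-neighbor
    have huniq : ∀ b', b' ≠ v → r b' v → b' = b := by
      intro b' hb'v hb'r
      by_contra hne
      rcases hsemi b b' (fun h => hne h.symm) with h | h
      · exact hcon b b' (Ne.symm hb) (Ne.symm hb'v) (fun h' => hne h'.symm)
          (hI b hb) h hb'r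
      · exact hcon b' b (Ne.symm hb'v) (Ne.symm hb) hne (hI b' hb'v) h hbv
    -- no vertex other than v points at b
    have hnoab : ∀ x, x ≠ v → x ≠ b → ¬ r x b := by
      intro x hxv hxb hxrb
      exact hcon x b (Ne.symm hxv) (Ne.symm hb) hxb (hI x hxv) hxrb hbv
    have hcard2 : ({v, b} : Finset (Fin n)).card ≤ 2 := by
      apply le_trans (Finset.card_insert_le _ _)
      simp
    obtain ⟨a, ha⟩ := hexists_ne {v, b} (by omega)
    simp only [Finset.mem_insert, Finset.mem_singleton] at ha
    push_neg at ha
    obtain ⟨hav, hab⟩ := ha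
    obtain ⟨x, hx, y, hy, hxy⟩ := moon_cross (S := {x | x ≠ v ∧ x ≠ b})
      (hsc a v hav) ⟨hav, hab⟩ (by simp)
    simp only [Set.mem_setOf_eq] at hx hy
    push_neg at hy
    obtain ⟨hx1, hx2⟩ := hx
    by_cases hyv : y = v
    · exact hx2 (huniq x hx1 (hyv ▸ hxy))
    · exact hnoab x hx1 hx2 ((hy hyv) ▸ hxy)

/-- Extend a cycle by inserting a new vertex `w` between position `-1` and position `0`. -/
lemma moon_extend {k : ℕ} (hk : 3 ≤ k) (c : ZMod k → Fin n)
    (hinj : Function.Injective c) (hedge : ∀ i, r (c i) (c (i + 1)))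
    (w : Fin n) (hw : ∀ i, c i ≠ w)
    (h1 : r (c (-1)) w) (h2 : r w (c 0)) :
    ∃ c' : ZMod (k + 1) → Fin n, Function.Injective c' ∧
      (∀ i, r (c' i) (c' (i + 1))) ∧ ∀ i : ZMod k, ∃ i', c' i' = c i := by
  haveI : NeZero k := ⟨by omega⟩
  refine ⟨fun t => if t.val < k then c ((t.val : ℕ) : ZMod k) else w, ?_, ?_, ?_⟩
  · intro s t h
    simp only at h
    by_cases hs : s.val < k <;> by_cases ht : t.val < k
    · rw [if_pos hs, if_pos ht] at h
      have h2' := congrArg ZMod.val (hinj h)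
      rw [ZMod.val_cast_of_lt hs, ZMod.val_cast_of_lt ht] at h2'
      exact ZMod.val_injective _ h2'
    · rw [if_pos hs, if_neg ht] at h
      exact absurd h (hw _)
    · rw [if_neg hs, if_pos ht] at h
      exact absurd h.symm (hw _)
    · have hs' : s.val < k + 1 := ZMod.val_lt s
      have ht' : t.val < k + 1 := ZMod.val_lt t
      exact ZMod.val_injective _ (by omega)
  · intro t
    have htlt : t.val < k + 1 := ZMod.val_lt t
    by_cases hc1 : t.val + 1 < k
    · have hv : (t + 1).val = t.val + 1 := moon_val_add_one (by omega) t (by omega)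
      simp only
      rw [hv, if_pos (by omega : t.val < k), if_pos hc1]
      have harg : ((t.val + 1 : ℕ) : ZMod k) = ((t.val : ℕ) : ZMod k) + 1 := by push_cast; ring
      rw [harg]
      exact hedge _
    · by_cases hc2 : t.val + 1 = k
      · have hv : (t + 1).val = t.val + 1 := moon_val_add_one (by omega) t (by omega)
        simp only
        rw [hv, if_pos (by omega : t.val < k), if_neg (by omega : ¬ t.val + 1 < k)]
        have harg : ((t.val : ℕ) : ZMod k) = -1 := by
          have hz : ((t.val : ℕ) : ZMod k) + 1 = 0 := by
            have h3 : ((t.val + 1 : ℕ) : ZMod k) = 0 := by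
              rw [hc2]; exact ZMod.natCast_self k
            rwa [Nat.cast_add, Nat.cast_one] at h3
          exact eq_neg_of_add_eq_zero_left hz
        rw [harg]
        exact h1
      · have htk : t.val = k := by omega
        have hz : t + 1 = 0 := moon_add_one_eq_zero t (by omega)
        simp only
        rw [hz, if_neg (by omega : ¬ t.val < k)]
        rw [show ((0 : ZMod (k + 1)).val) = 0 from ZMod.val_zero]
        rw [if_pos (by omega : 0 < k)]
        rw [show (((0 : ℕ)) : ZMod k) = 0 from Nat.cast_zero]
        exact h2
  · intro i
    refine ⟨((i.val : ℕ) : ZMod (k + 1)), ?_⟩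
    have hlt : i.val < k := ZMod.val_lt i
    simp only
    rw [ZMod.val_cast_of_lt (by omega : i.val < k + 1), if_pos hlt,
      ZMod.natCast_rightInverse i]

/-- Extend a cycle by replacing its last vertex (position `-1`) by two new vertices
`u, z`, keeping position `0`. -/
lemma moon_extend2 {k : ℕ} (hk : 3 ≤ k) (c : ZMod k → Fin n)
    (hinj : Function.Injective c) (hedge : ∀ i, r (c i) (c (i + 1)))
    (u z : Fin n) (hu : ∀ i, c i ≠ u) (hz : ∀ i, c i ≠ z) (huz : u ≠ z)
    (hcu : ∀ i, r (c i) u) (hruz : r u z) (hzc : ∀ i, r z (c i)) :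
    ∃ c' : ZMod (k + 1) → Fin n, Function.Injective c' ∧
      (∀ i, r (c' i) (c' (i + 1))) ∧ ∃ i', c' i' = c 0 := by
  haveI : NeZero k := ⟨by omega⟩
  refine ⟨fun t => if t.val < k - 1 then c ((t.val : ℕ) : ZMod k)
      else if t.val = k - 1 then u else z, ?_, ?_, ?_⟩
  · intro s t h
    simp only at h
    have hs' : s.val < k + 1 := ZMod.val_lt s
    have ht' : t.val < k + 1 := ZMod.val_lt t
    by_cases hs : s.val < k - 1 <;> by_cases ht : t.val < k - 1
    · rw [if_pos hs, if_pos ht] at h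
      have h2' := congrArg ZMod.val (hinj h)
      rw [ZMod.val_cast_of_lt (by omega), ZMod.val_cast_of_lt (by omega)] at h2'
      exact ZMod.val_injective _ h2'
    · rw [if_pos hs, if_neg ht] at h
      by_cases ht2 : t.val = k - 1
      · rw [if_pos ht2] at h; exact absurd h (hu _)
      · rw [if_neg ht2] at h; exact absurd h (hz _)
    · rw [if_neg hs, if_pos ht] at h
      by_cases hs2 : s.val = k - 1
      · rw [if_pos hs2] at h; exact absurd h.symm (hu _)
      · rw [if_neg hs2] at h; exact absurd h.symm (hz _)
    · rw [if_neg hs, if_neg ht] at h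
      by_cases hs2 : s.val = k - 1 <;> by_cases ht2 : t.val = k - 1
      · exact ZMod.val_injective _ (by omega)
      · rw [if_pos hs2, if_neg ht2] at h; exact absurd h huz
      · rw [if_neg hs2, if_pos ht2] at h; exact absurd h.symm huz
      · exact ZMod.val_injective _ (by omega)
  · intro t
    have htlt : t.val < k + 1 := ZMod.val_lt t
    by_cases hc1 : t.val + 1 < k - 1
    · have hv : (t + 1).val = t.val + 1 := moon_val_add_one (by omega) t (by omega)
      simp only
      rw [hv, if_pos (by omega : t.val < k - 1), if_pos hc1]
      have harg : ((t.val + 1 : ℕ) : ZMod k) = ((t.val : ℕ) : ZMod k) + 1 := by push_cast; ring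
      rw [harg]
      exact hedge _
    · by_cases hc2 : t.val + 1 = k - 1
      · have hv : (t + 1).val = t.val + 1 := moon_val_add_one (by omega) t (by omega)
        simp only
        rw [hv, if_pos (by omega : t.val < k - 1), if_neg (by omega : ¬ t.val + 1 < k - 1),
          if_pos hc2]
        exact hcu _
      · by_cases hc3 : t.val = k - 1
        · have hv : (t + 1).val = t.val + 1 := moon_val_add_one (by omega) t (by omega)
          simp only
          rw [hv, if_neg (by omega : ¬ t.val < k - 1), if_pos hc3,
            if_neg (by omega : ¬ t.val + 1 < k - 1), if_neg (by omega : ¬ t.val + 1 = k - 1)]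
          exact hruz
        · have htk : t.val = k := by omega
          have hz0 : t + 1 = 0 := moon_add_one_eq_zero t (by omega)
          simp only
          rw [hz0, if_neg (by omega : ¬ t.val < k - 1), if_neg (by omega : ¬ t.val = k - 1)]
          rw [show ((0 : ZMod (k + 1)).val) = 0 from ZMod.val_zero]
          rw [if_pos (by omega : 0 < k - 1)]
          rw [show (((0 : ℕ)) : ZMod k) = 0 from Nat.cast_zero]
          exact hzc _
  · refine ⟨0, ?_⟩
    simp only
    rw [show ((0 : ZMod (k + 1)).val) = 0 from ZMod.val_zero]
    rw [if_pos (by omega : 0 < k - 1)]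
    rw [show (((0 : ℕ)) : ZMod k) = 0 from Nat.cast_zero]

end Moon

/-- Moon: in a strongly connected semi-complete digraph on `n ≥ 3` vertices,
every vertex lies on a directed cycle of length `k` for each `k = 3, …, n`. -/
theorem vertex_pancyclic_of_stronglyConnected_semiComplete {n : ℕ} (hn : 3 ≤ n)
    (r : Fin n → Fin n → Prop) (hsemi : SemiComplete r) (hsc : StronglyConnected r)
    (v : Fin n) (k : ℕ) (hk3 : 3 ≤ k) (hkn : k ≤ n) :
    ∃ c : ZMod k → Fin n, Function.Injective c ∧ (∀ i : ZMod k, r (c i) (c (i + 1))) ∧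
      ∃ i : ZMod k, c i = v := by
  revert hkn
  induction k, hk3 using Nat.le_induction with
  | base =>
    intro _
    obtain ⟨a, b, hva, hvb, hab, e1, e2, e3⟩ := moon_triangle hn hsemi hsc v
    have h3 : ∀ i : ZMod 3, i = 0 ∨ i = 1 ∨ i = 2 := by decide
    have hne10 : ¬((1 : ZMod 3) = 0) := by decide
    have hne20 : ¬((2 : ZMod 3) = 0) := by decide
    have hne21 : ¬((2 : ZMod 3) = 1) := by decide
    have hv0 : (if (0 : ZMod 3) = 0 then v else if (0 : ZMod 3) = 1 then a else b) = v :=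
      if_pos rfl
    have hv1 : (if (1 : ZMod 3) = 0 then v else if (1 : ZMod 3) = 1 then a else b) = a := by
      rw [if_neg hne10, if_pos rfl]
    have hv2 : (if (2 : ZMod 3) = 0 then v else if (2 : ZMod 3) = 1 then a else b) = b := by
      rw [if_neg hne20, if_neg hne21]
    refine ⟨fun i => if i = 0 then v else if i = 1 then a else b, ?_, ?_, 0, hv0⟩
    · intro s t h
      rcases h3 s with rfl | rfl | rfl <;> rcases h3 t with rfl | rfl | rfl <;> try rfl
      all_goals simp only [hv0, hv1, hv2] at h
      · exact absurd h hva
      · exact absurd h hvb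
      · exact absurd h.symm hva
      · exact absurd h hab
      · exact absurd h.symm hvb
      · exact absurd h.symm hab
    · intro i
      rcases h3 i with rfl | rfl | rfl
      · simp only [show (0 : ZMod 3) + 1 = 1 from by decide, hv0, hv1]
        exact e1
      · simp only [show (1 : ZMod 3) + 1 = 2 from by decide, hv1, hv2]
        exact e2
      · simp only [show (2 : ZMod 3) + 1 = 0 from by decide, hv2, hv0]
        exact e3
  | succ k hk ih =>
    intro hkn1
    obtain ⟨c, hinj, hedge, i₀, hi₀⟩ := ih (by omega)
    haveI : NeZero k := ⟨by omega⟩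
    have hnotsurj : ∃ w : Fin n, ∀ i, c i ≠ w := by
      by_contra h
      push_neg at h
      have hsurj : Function.Surjective c := fun w => h w
      have hcard := Fintype.card_le_of_surjective c hsurj
      rw [ZMod.card, Fintype.card_fin] at hcard
      omega
    obtain ⟨w₀, hw₀⟩ := hnotsurj
    by_cases hins : ∃ w, (∀ i, c i ≠ w) ∧ ∃ i, r (c i) w ∧ r w (c (i + 1))
    · -- insert w into the cycle
      obtain ⟨w, hw, i, hiw, hwi⟩ := hins
      have hd1 : r ((fun t : ZMod k => c (t + i + 1)) (-1)) w := by
        simp only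
        rw [show (-1 : ZMod k) + i + 1 = i from by ring]
        exact hiw
      have hd2 : r w ((fun t : ZMod k => c (t + i + 1)) 0) := by
        simp only
        rw [show (0 : ZMod k) + i + 1 = i + 1 from by ring]
        exact hwi
      obtain ⟨c', h1, h2, h3⟩ := moon_extend hk (fun t : ZMod k => c (t + i + 1))
        (fun s t h => by
          have := hinj h
          exact add_right_cancel (add_right_cancel this))
        (fun t => by
          rw [show t + 1 + i + 1 = (t + i + 1) + 1 from by ring]
          exact hedge _)
        w (fun t => hw _) hd1 hd2
      obtain ⟨i', hi'⟩ := h3 (i₀ - i - 1)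
      refine ⟨c', h1, h2, i', ?_⟩
      rw [hi']
      show c (i₀ - i - 1 + i + 1) = v
      rw [show i₀ - i - 1 + i + 1 = i₀ from by ring]
      exact hi₀
    · push_neg at hins
      -- hins : ∀ w, (∀ i, c i ≠ w) → ∀ i, ¬(r (c i) w ∧ r w (c (i+1)))
      have dich : ∀ w, (∀ i, c i ≠ w) →
          (∀ i, ¬ r w (c i)) ∨ (∀ i, ¬ r (c i) w) := by
        intro w hw
        by_cases hex : ∃ i, r (c i) w
        · left
          obtain ⟨i1, hi1⟩ := hex
          have hall : ∀ m : ℕ, r (c (i1 + (m : ZMod k))) w := by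
            intro m
            induction m with
            | zero => simpa using hi1
            | succ m ihm =>
              have hni := hins w hw (i1 + (m : ZMod k))
              have hnw : ¬ r w (c (i1 + (m : ZMod k) + 1)) := hni ihm
              have hne : w ≠ c (i1 + (m : ZMod k) + 1) := fun h => hw _ h.symm
              have := (hsemi w (c (i1 + (m : ZMod k) + 1)) hne).resolve_left hnw
              rw [show ((m + 1 : ℕ) : ZMod k) = (m : ZMod k) + 1 from by push_cast; ring,
                ← add_assoc]
              exact this
          have hallidx : ∀ j : ZMod k, r (c j) w := by
            intro j
            have h := hall (j - i1).val
            rw [ZMod.natCast_rightInverse (j - i1),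
              show i1 + (j - i1) = j from by ring] at h
            exact h
          intro j hrw
          have h1 := hins w hw (j - 1)
          rw [show j - 1 + 1 = j from by ring] at h1
          exact h1 (hallidx (j - 1)) hrw
        · right
          push_neg at hex
          exact hex
      -- find an "Out" vertex: dominated by the cycle, pointing nowhere into it
      have hvw₀ : v ≠ w₀ := fun h => hw₀ i₀ (h ▸ hi₀)
      obtain ⟨x, hx, y, hy, hxy⟩ := moon_cross (S := {x | ∃ i, c i = x})
        (hsc v w₀ hvw₀) ⟨i₀, hi₀⟩ (fun ⟨i, hi⟩ => hw₀ i hi)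
      have hy' : ∀ i, c i ≠ y := fun i hi => hy ⟨i, hi⟩
      have hyOut : ∀ i, ¬ r y (c i) := by
        rcases dich y hy' with h | h
        · exact h
        · obtain ⟨ix, hix⟩ := hx
          exact absurd (hix ▸ hxy) (h ix)
      -- cross from the Out-set to v : this yields an Out→In edge
      have hyv : y ≠ v := fun h => hy ⟨i₀, by rw [hi₀, h]⟩
      obtain ⟨u, hu, z, hznotS, hruz⟩ := moon_cross
        (S := {x | (∀ i, c i ≠ x) ∧ ∀ i, ¬ r x (c i)})
        (hsc y v hyv) ⟨hy', hyOut⟩ (fun h => h.1 i₀ hi₀)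
      obtain ⟨huc, huOut⟩ := hu
      have hzc' : ∀ i, c i ≠ z := fun i hi => huOut i (hi ▸ hruz)
      have hzIn : ∀ i, ¬ r (c i) z := by
        rcases dich z hzc' with h | h
        · exact absurd ⟨hzc', h⟩ hznotS
        · exact h
      have hcu : ∀ i, r (c i) u := fun i =>
        (hsemi u (c i) (fun h => huc i h.symm)).resolve_left (huOut i)
      have hzc2 : ∀ i, r z (c i) := fun i =>
        (hsemi (c i) z (hzc' i)).resolve_left (hzIn i)
      have huz : u ≠ z := by
        intro h
        rcases hsemi u (c 0) (fun h' => huc 0 h'.symm) with h1 | h2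
        · exact huOut 0 h1
        · exact hzIn 0 (h ▸ h2)
      -- rotate cycle so position 0 is v, then extend
      obtain ⟨c', h1, h2, i', hi'⟩ := moon_extend2 hk (fun t : ZMod k => c (t + i₀))
        (fun s t h => by
          have := hinj h
          exact add_right_cancel this)
        (fun t => by
          rw [show t + 1 + i₀ = (t + i₀) + 1 from by ring]
          exact hedge _)
        u z (fun t => huc _) (fun t => hzc' _) huz (fun t => hcu _) hruz (fun t => hzc2 _)
      refine ⟨c', h1, h2, i', ?_⟩
      rw [hi']
      show c (0 + i₀) = v
      rw [zero_add]
      exact hi₀
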